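/- For every finite set P of points in the plane in general position, the θ₅-graph of P is a connected graph. -/

import Mathlib

noncomputable section

/-- The plane ℝ². -/
abbrev Plane : Type := EuclideanSpace ℝ (Fin 2)

/-- The bisector direction of the `i`-th cone: the unit vector obtained by rotating `(0,1)`
clockwise by `i · 2π/5`. -/
noncomputable def coneDir (i : Fin 5) : Plane :=
  WithLp.toLp 2 ![Real.sin ((i : ℕ) * (2 * Real.pi / 5)), Real.cos ((i : ℕ) * (2 * Real.pi / 5))]

/-- The cone `Cᵢᵘ`: all points `p ≠ u` such that the angle between `p - u` and the
bisector direction `coneDir i` is less than `π/5`. -/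
def cone (u : Plane) (i : Fin 5) : Set Plane :=
  {p | p ≠ u ∧ InnerProductGeometry.angle (p - u) (coneDir i) < Real.pi / 5}

/-- A set of points is in general position if no difference of two distinct points makes an
angle that is an integer multiple of `π/5` with either coordinate axis. -/
def GeneralPosition (P : Set Plane) : Prop :=
  ∀ p ∈ P, ∀ q ∈ P, p ≠ q → ∀ k : ℤ,
    (p - q) 0 * Real.cos (k * (Real.pi / 5)) - (p - q) 1 * Real.sin (k * (Real.pi / 5)) ≠ 0 ∧
    (p - q) 0 * Real.sin (k * (Real.pi / 5)) + (p - q) 1 * Real.cos (k * (Real.pi / 5)) ≠ 0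

/-- `v` is the point of `P` in the cone `Cᵢᵘ` that is closest to `u`, where distance is
measured by projection onto the bisector of the cone. -/
def isClosest (P : Set Plane) (u : Plane) (i : Fin 5) (v : Plane) : Prop :=
  v ∈ P ∧ v ∈ cone u i ∧
    ∀ p ∈ P, p ∈ cone u i → (inner ℝ (v - u) (coneDir i) : ℝ) ≤ inner ℝ (p - u) (coneDir i)

/-- The θ₅-graph of a point set `P`: each `u ∈ P` is joined to the closest point of `P`
in each of its five cones. -/
def thetaGraph (P : Set Plane) : SimpleGraph Plane where
  Adj u v := u ∈ P ∧ v ∈ P ∧ u ≠ v ∧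
    ((∃ i, isClosest P u i v) ∨ (∃ i, isClosest P v i u))
  symm := by
    constructor
    rintro u v ⟨hu, hv, hne, h⟩
    exact ⟨hv, hu, hne.symm, h.symm⟩
  loopless := by
    constructor
    rintro u ⟨-, -, hne, -⟩
    exact hne rfl

/-- The Euclidean length of a walk in the θ₅-graph. -/
noncomputable def walkLength {P : Set Plane} {u v : Plane} (p : (thetaGraph P).Walk u v) : ℝ :=
  (p.darts.map fun d => dist d.toProd.1 d.toProd.2).sum

/-- The canonical triangle `T_{u,w}` (for `w ∈ Cᵢᵘ`): the closed triangle bounded by the two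
boundary rays of `Cᵢᵘ` and the line through `w` perpendicular to the bisector of the cone. -/
def canonicalTriangle (u w : Plane) (i : Fin 5) : Set Plane :=
  {p | (p = u ∨ InnerProductGeometry.angle (p - u) (coneDir i) ≤ Real.pi / 5) ∧
       (inner ℝ (p - u) (coneDir i) : ℝ) ≤ inner ℝ (w - u) (coneDir i)}

/-- The size `|T_{u,w}|` of the canonical triangle, i.e. the length of each of the two sides
incident to the apex `u`. -/
noncomputable def triangleSize (u w : Plane) (i : Fin 5) : ℝ :=
  (inner ℝ (w - u) (coneDir i) : ℝ) / Real.cos (Real.pi / 5)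

open Real

/-- arccos is antitone. -/
lemma my_arccos_le_arccos {x y : ℝ} (h : x ≤ y) : arccos y ≤ arccos x := by
  rw [Real.arccos, Real.arccos]
  have := Real.monotone_arcsin h
  linarith

lemma my_cos_lt_of_arccos_lt {c x : ℝ} (hc0 : 0 ≤ c) (hcπ : c ≤ π) (h : arccos x < c) :
    Real.cos c < x := by
  by_contra hle
  push_neg at hle
  have := my_arccos_le_arccos hle
  rw [Real.arccos_cos hc0 hcπ] at this
  linarith

lemma my_arccos_lt_of_cos_lt {c x : ℝ} (hc0 : 0 ≤ c) (hx : x ≤ 1) (h : Real.cos c < x) :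
    arccos x < c := by
  by_contra hle
  push_neg at hle
  have h1 : Real.cos (arccos x) ≤ Real.cos c :=
    Real.cos_le_cos_of_nonneg_of_le_pi hc0 (Real.arccos_le_pi x) hle
  rw [Real.cos_arccos (by nlinarith [Real.neg_one_le_cos c]) hx] at h1
  linarith

/-- |x| ≤ c ≤ π implies cos c ≤ cos x. -/
lemma my_cos_le_cos_of_abs_le {x c : ℝ} (hc : c ≤ π) (h : |x| ≤ c) :
    Real.cos c ≤ Real.cos x := by
  rw [← Real.cos_abs x]
  exact Real.cos_le_cos_of_nonneg_of_le_pi (abs_nonneg x) hc h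

/-- From cos c ≤ cos x with x ∈ (-π, π], 0 ≤ c, conclude |x| ≤ c. -/
lemma my_abs_le_of_cos_le_cos {x c : ℝ} (hc0 : 0 ≤ c) (hx1 : -π < x) (hx2 : x ≤ π)
    (h : Real.cos c ≤ Real.cos x) : |x| ≤ c := by
  by_contra hlt
  push_neg at hlt
  have h1 : Real.cos |x| < Real.cos c :=
    Real.cos_lt_cos_of_nonneg_of_le_pi hc0 (abs_le.mpr ⟨by linarith, hx2⟩) hlt
  rw [Real.cos_abs] at h1
  linarith

/-- Strict version. -/
lemma my_abs_lt_of_cos_lt_cos {x c : ℝ} (hc0 : 0 ≤ c) (hx1 : -π < x) (hx2 : x ≤ π)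
    (h : Real.cos c < Real.cos x) : |x| < c := by
  by_contra hle
  push_neg at hle
  have h1 : Real.cos |x| ≤ Real.cos c := by
    rcases eq_or_lt_of_le hle with he | hlt
    · rw [← he]
    · exact (Real.cos_lt_cos_of_nonneg_of_le_pi hc0 (abs_le.mpr ⟨by linarith, hx2⟩) hlt).le
  rw [Real.cos_abs] at h1
  linarith

/-- The core trigonometric inequality. -/
lemma trig_core {r ρ A B : ℝ} (hr : 0 < r) (hρ : 0 < ρ)
    (hA : Real.cos (π/10) ≤ Real.cos A) (hB : Real.cos (π/5) < Real.cos B)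
    (hproj : ρ * Real.cos B ≤ r * Real.cos A) : ρ < 2 * r * Real.cos (B - A) := by
  have hπ := Real.pi_pos
  set T := ((A : Real.Angle)).toReal with hTdef
  set S := ((B : Real.Angle)).toReal with hSdef
  have hcT : Real.cos T = Real.cos A := by
    have h1 : ((T : ℝ) : Real.Angle) = (A : Real.Angle) := Real.Angle.coe_toReal _
    calc Real.cos T = Real.Angle.cos (T : Real.Angle) := (Real.Angle.cos_coe T).symm
      _ = Real.Angle.cos (A : Real.Angle) := by rw [h1]
      _ = Real.cos A := Real.Angle.cos_coe A
  have hcS : Real.cos S = Real.cos B := by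
    have h1 : ((S : ℝ) : Real.Angle) = (B : Real.Angle) := Real.Angle.coe_toReal _
    calc Real.cos S = Real.Angle.cos (S : Real.Angle) := (Real.Angle.cos_coe S).symm
      _ = Real.Angle.cos (B : Real.Angle) := by rw [h1]
      _ = Real.cos B := Real.Angle.cos_coe B
  have hcBA : Real.cos (B - A) = Real.cos (S - T) := by
    have h1 : ((S - T : ℝ) : Real.Angle) = ((B - A : ℝ) : Real.Angle) := by
      rw [Real.Angle.coe_sub, Real.Angle.coe_sub, Real.Angle.coe_toReal, Real.Angle.coe_toReal]
    calc Real.cos (B - A) = Real.Angle.cos ((B - A : ℝ) : Real.Angle) :=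
          (Real.Angle.cos_coe _).symm
      _ = Real.Angle.cos ((S - T : ℝ) : Real.Angle) := by rw [h1]
      _ = Real.cos (S - T) := Real.Angle.cos_coe _
  have hTmem := Real.Angle.toReal_mem_Ioc (A : Real.Angle)
  have hSmem := Real.Angle.toReal_mem_Ioc (B : Real.Angle)
  have hTabs : |T| ≤ π/10 :=
    my_abs_le_of_cos_le_cos (by linarith) hTmem.1 hTmem.2 (by rw [hcT]; exact hA)
  have hSabs : |S| < π/5 :=
    my_abs_lt_of_cos_lt_cos (by linarith) hSmem.1 hSmem.2 (by rw [hcS]; exact hB)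
  obtain ⟨hT1, hT2⟩ := abs_le.mp hTabs
  obtain ⟨hS1, hS2⟩ := abs_lt.mp hSabs
  have hcosS : 0 < Real.cos S := by
    have : Real.cos (π/5) > 0 := Real.cos_pos_of_mem_Ioo ⟨by linarith, by linarith⟩
    rw [hcS]; linarith
  have hkey : 0 < Real.cos (2*S - T) :=
    Real.cos_pos_of_mem_Ioo ⟨by linarith, by linarith⟩
  have hexp : 2 * Real.cos S * Real.cos (S - T) = Real.cos (2*S - T) + Real.cos T := by
    have c1 := Real.cos_add S (S - T)
    have c2 := Real.cos_sub S (S - T)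
    rw [show S + (S - T) = 2*S - T from by ring] at c1
    rw [show S - (S - T) = T from by ring] at c2
    linarith
  have hlt : Real.cos T < 2 * Real.cos S * Real.cos (S - T) := by
    rw [hexp]; linarith
  have h3 : ρ * Real.cos S < (2 * r * Real.cos (S - T)) * Real.cos S := by
    have : ρ * Real.cos S ≤ r * Real.cos T := by rw [hcS, hcT]; exact hproj
    nlinarith
  have := lt_of_mul_lt_mul_right h3 hcosS.le
  rw [hcBA]; linarith


lemma inner_plane (x w : Plane) : (inner ℝ x w : ℝ) = x 0 * w 0 + x 1 * w 1 := by
  rw [PiLp.inner_apply, Fin.sum_univ_two]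
  simp [RCLike.inner_apply, mul_comm]

/-- Polar coordinates for a nonzero vector in the plane. -/
lemma exists_polar (x : Plane) (hx : x ≠ 0) :
    ∃ φ : ℝ, x 0 = ‖x‖ * Real.sin φ ∧ x 1 = ‖x‖ * Real.cos φ := by
  have hr : 0 < ‖x‖ := norm_pos_iff.mpr hx
  have hsq : ‖x‖ ^ 2 = (x 0) ^ 2 + (x 1) ^ 2 := by
    rw [EuclideanSpace.norm_eq, Real.sq_sqrt (by positivity)]
    simp [Fin.sum_univ_two, sq_abs]
  have habs : |x 1| ≤ ‖x‖ := by
    nlinarith [sq_abs (x 1), abs_nonneg (x 1), sq_nonneg (x 0)]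
  have hc1 : -1 ≤ x 1 / ‖x‖ := by
    rw [le_div_iff₀ hr]; have := neg_abs_le (x 1); linarith
  have hc2 : x 1 / ‖x‖ ≤ 1 := by
    rw [div_le_one hr]; exact le_of_abs_le habs
  have hcos : Real.cos (arccos (x 1 / ‖x‖)) = x 1 / ‖x‖ := Real.cos_arccos hc1 hc2
  have hsin : Real.sin (arccos (x 1 / ‖x‖)) = |x 0| / ‖x‖ := by
    rw [Real.sin_arccos]
    rw [show 1 - (x 1 / ‖x‖) ^ 2 = (x 0)^2 / ‖x‖^2 by field_simp; nlinarith]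
    rw [Real.sqrt_div (sq_nonneg (x 0)), Real.sqrt_sq_eq_abs, Real.sqrt_sq hr.le]
  refine ⟨if 0 ≤ x 0 then arccos (x 1 / ‖x‖) else -arccos (x 1 / ‖x‖), ?_, ?_⟩
  · split_ifs with h0
    · rw [hsin, abs_of_nonneg h0]; field_simp
    · rw [Real.sin_neg, hsin, abs_of_neg (lt_of_not_ge h0)]; field_simp
  · split_ifs with h0
    · rw [hcos]; field_simp
    · rw [Real.cos_neg, hcos]; field_simp



lemma inner_coneDir (x : Plane) (i : Fin 5) :
    (inner ℝ x (coneDir i) : ℝ) =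
      x 0 * Real.sin (((i:ℕ):ℝ) * (2 * π / 5)) + x 1 * Real.cos (((i:ℕ):ℝ) * (2 * π / 5)) := by
  rw [inner_plane]
  simp [coneDir]

lemma coneDir_norm (i : Fin 5) : ‖coneDir i‖ = 1 := by
  rw [EuclideanSpace.norm_eq, Fin.sum_univ_two]
  simp only [coneDir, Matrix.cons_val_zero, Matrix.cons_val_one, Matrix.head_cons,
    Real.norm_eq_abs, sq_abs]
  rw [Real.sin_sq_add_cos_sq, Real.sqrt_one]

/-- There is a cone direction within π/10 of x or of -x. -/
lemma exists_good_dir (x : Plane) (hx : x ≠ 0)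
    (hpolar : ∃ φ : ℝ, x 0 = ‖x‖ * Real.sin φ ∧ x 1 = ‖x‖ * Real.cos φ) :
    ∃ i : Fin 5, ‖x‖ * Real.cos (π/10) ≤ (inner ℝ x (coneDir i) : ℝ) ∨
      ‖x‖ * Real.cos (π/10) ≤ (inner ℝ (-x) (coneDir i) : ℝ) := by
  have hπ := Real.pi_pos
  obtain ⟨φ, hx0, hx1⟩ := hpolar
  have hr : 0 < ‖x‖ := norm_pos_iff.mpr hx
  set k : ℤ := round (φ / (π/5)) with hk
  have habs : |φ - (k:ℝ) * (π/5)| ≤ π/10 := by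
    have h0 : |φ / (π/5) - (k:ℝ)| ≤ 1/2 := abs_sub_round (φ / (π/5))
    have he : φ - (k:ℝ) * (π/5) = (φ / (π/5) - (k:ℝ)) * (π/5) := by field_simp
    rw [he, abs_mul, abs_of_pos (by linarith : (0:ℝ) < π/5)]
    nlinarith [abs_nonneg (φ / (π/5) - (k:ℝ))]
  set k' : ℤ := if Even k then k else k + 5 with hk'
  have hk'ev : Even k' := by
    by_cases h : Even k
    · simpa [hk', h]
    · simp only [hk', h, if_false]
      exact (Int.not_even_iff_odd.mp h).add_odd (by decide)
  set m : ℤ := k' / 2 with hm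
  have h2m : 2 * m = k' := Int.two_mul_ediv_two_of_even hk'ev
  set i₀ : ℤ := m % 5 with hi₀
  set n : ℤ := m / 5 with hn
  have hi₀0 : 0 ≤ i₀ := Int.emod_nonneg m (by norm_num)
  have hi₀5 : i₀ < 5 := Int.emod_lt_of_pos m (by norm_num)
  have hmn : m = 5 * n + i₀ := by rw [hi₀, hn]; omega
  refine ⟨⟨i₀.toNat, by omega⟩, ?_⟩
  have hcast : ((Fin.mk i₀.toNat (by omega : i₀.toNat < 5) : Fin 5) : ℕ) = i₀.toNat := rfl
  set θ : ℝ := ((i₀.toNat : ℕ) : ℝ) * (2 * π / 5) with hθdef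
  have hcastR : ((i₀.toNat : ℕ) : ℝ) = (i₀ : ℝ) := by
    exact_mod_cast congrArg (Int.cast : ℤ → ℝ) (Int.toNat_of_nonneg hi₀0)
  have hθ : (k' : ℝ) * (π/5) = θ + (n:ℝ) * (2 * π) := by
    rw [hθdef, hcastR]
    have : (k' : ℝ) = 2 * (5 * (n:ℝ) + (i₀:ℝ)) := by
      rw [← h2m, hmn]; push_cast; ring
    rw [this]; ring
  have hcosk : Real.cos (π/10) ≤ Real.cos (φ - (k:ℝ) * (π/5)) := by
    have h1 : Real.cos (π/10) ≤ Real.cos |φ - (k:ℝ) * (π/5)| :=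
      Real.cos_le_cos_of_nonneg_of_le_pi (abs_nonneg _) (by linarith) habs
    rwa [Real.cos_abs] at h1
  have hinner : (inner ℝ x (coneDir ⟨i₀.toNat, by omega⟩) : ℝ) = ‖x‖ * Real.cos (φ - θ) := by
    rw [inner_coneDir, hx0, hx1]
    rw [Real.cos_sub]
    push_cast [hcast]
    ring
  by_cases hev : Even k
  · left
    have hkk : k' = k := by simp [hk', hev]
    have : φ - θ = (φ - (k:ℝ) * (π/5)) + (n:ℝ) * (2 * π) := by
      have := hθ; rw [hkk] at this; push_cast at this ⊢; linarith
    rw [hinner, this, Real.cos_add_int_mul_two_pi]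
    exact mul_le_mul_of_nonneg_left hcosk hr.le
  · right
    have hkk : k' = k + 5 := by simp [hk', hev]
    have hphase : φ - θ = ((φ - (k:ℝ) * (π/5)) - π) + (n:ℝ) * (2 * π) := by
      have := hθ; rw [hkk] at this; push_cast at this ⊢; linarith
    have hcosθ : Real.cos (φ - θ) = -Real.cos (φ - (k:ℝ) * (π/5)) := by
      rw [hphase, Real.cos_add_int_mul_two_pi, Real.cos_sub_pi]
    rw [inner_neg_left, hinner, hcosθ]
    push_cast
    nlinarith

/-- If x points within π/10 of the bisector (in the cos sense), y is in the open cone,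
and y's projection is at most x's, then y - x is shorter than x. -/
lemma key_lemma {x y : Plane} (i : Fin 5) (hx : x ≠ 0) (hy : y ≠ 0)
    (hxθ : ‖x‖ * Real.cos (π/10) ≤ (inner ℝ x (coneDir i) : ℝ))
    (hyθ : ‖y‖ * Real.cos (π/5) < (inner ℝ y (coneDir i) : ℝ))
    (hproj : (inner ℝ y (coneDir i) : ℝ) ≤ (inner ℝ x (coneDir i) : ℝ)) :
    ‖y - x‖ < ‖x‖ := by
  have hπ := Real.pi_pos
  obtain ⟨φ, hx0, hx1⟩ := exists_polar x hx
  obtain ⟨ψ, hy0, hy1⟩ := exists_polar y hy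
  have hr : 0 < ‖x‖ := norm_pos_iff.mpr hx
  have hρ : 0 < ‖y‖ := norm_pos_iff.mpr hy
  set θ : ℝ := ((i:ℕ):ℝ) * (2 * π / 5) with hθ
  have hix : (inner ℝ x (coneDir i) : ℝ) = ‖x‖ * Real.cos (φ - θ) := by
    rw [inner_coneDir, hx0, hx1, Real.cos_sub]; ring
  have hiy : (inner ℝ y (coneDir i) : ℝ) = ‖y‖ * Real.cos (ψ - θ) := by
    rw [inner_coneDir, hy0, hy1, Real.cos_sub]; ring
  have hA : Real.cos (π/10) ≤ Real.cos (φ - θ) := by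
    rw [hix] at hxθ
    exact le_of_mul_le_mul_left (by linarith) hr
  have hB : Real.cos (π/5) < Real.cos (ψ - θ) := by
    rw [hiy] at hyθ
    exact lt_of_mul_lt_mul_left (by linarith) hρ.le
  have hpr : ‖y‖ * Real.cos (ψ - θ) ≤ ‖x‖ * Real.cos (φ - θ) := by
    rw [hix, hiy] at hproj; exact hproj
  have hmain : ‖y‖ < 2 * ‖x‖ * Real.cos ((ψ - θ) - (φ - θ)) := trig_core hr hρ hA hB hpr
  have hxyinner : (inner ℝ y x : ℝ) = ‖y‖ * ‖x‖ * Real.cos ((ψ - θ) - (φ - θ)) := by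
    have : (ψ - θ) - (φ - θ) = ψ - φ := by ring
    rw [this]
    have : (inner ℝ y x : ℝ) = y 0 * x 0 + y 1 * x 1 := by
      rw [PiLp.inner_apply, Fin.sum_univ_two]; simp [RCLike.inner_apply, mul_comm]
    rw [this, hx0, hx1, hy0, hy1, Real.cos_sub]; ring
  have hsq : ‖y - x‖ ^ 2 < ‖x‖ ^ 2 := by
    have hns := norm_sub_sq_real y x
    have : (2:ℝ) * (inner ℝ y x : ℝ) > ‖y‖^2 := by
      rw [hxyinner]; nlinarith
    nlinarith
  exact lt_of_pow_lt_pow_left₀ 2 (norm_nonneg x) hsq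

/-- Membership in the cone from the inner-product bound. -/
lemma mem_cone_of_inner {u v : Plane} (i : Fin 5) (hvu : v ≠ u)
    (h : ‖v - u‖ * Real.cos (π/10) ≤ (inner ℝ (v - u) (coneDir i) : ℝ)) :
    v ∈ cone u i := by
  have hπ := Real.pi_pos
  have hx : v - u ≠ 0 := sub_ne_zero_of_ne hvu
  have hr : 0 < ‖v - u‖ := norm_pos_iff.mpr hx
  refine ⟨hvu, ?_⟩
  rw [InnerProductGeometry.angle, coneDir_norm, mul_one]
  apply my_arccos_lt_of_cos_lt (by linarith) _ _
  · rw [div_le_one hr]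
    calc (inner ℝ (v-u) (coneDir i) : ℝ) ≤ ‖v - u‖ * ‖coneDir i‖ := real_inner_le_norm _ _
      _ = ‖v - u‖ := by rw [coneDir_norm, mul_one]
  · rw [lt_div_iff₀ hr]
    have hcc : Real.cos (π/5) < Real.cos (π/10) :=
      Real.cos_lt_cos_of_nonneg_of_le_pi (by linarith) (by linarith) (by linarith)
    nlinarith
/-- Inner-product bound from cone membership. -/
lemma inner_of_mem_cone {u w : Plane} (i : Fin 5) (hw : w ∈ cone u i) :
    ‖w - u‖ * Real.cos (π/5) < (inner ℝ (w - u) (coneDir i) : ℝ) := by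
  have hπ := Real.pi_pos
  obtain ⟨hwu, hang⟩ := hw
  have hx : w - u ≠ 0 := sub_ne_zero_of_ne hwu
  have hr : 0 < ‖w - u‖ := norm_pos_iff.mpr hx
  rw [InnerProductGeometry.angle, coneDir_norm, mul_one] at hang
  have := my_cos_lt_of_arccos_lt (by linarith) (by linarith) hang
  rw [lt_div_iff₀ hr] at this
  linarith

/-- The key step: if the cone towards v is well aligned, u has a neighbour strictly
closer to v (or equal to v). -/
lemma step_lemma (P : Set Plane) (hfin : P.Finite) {u v : Plane} (hu : u ∈ P) (hv : v ∈ P)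
    (hvu : v ≠ u) (i : Fin 5)
    (h : ‖v - u‖ * Real.cos (π/10) ≤ (inner ℝ (v - u) (coneDir i) : ℝ)) :
    ∃ w ∈ P, (thetaGraph P).Adj u w ∧ (w = v ∨ dist w v < dist u v) := by
  have hvc : v ∈ cone u i := mem_cone_of_inner i hvu h
  obtain ⟨w, hwmem, hwmin⟩ := Set.exists_min_image (P ∩ cone u i)
    (fun p => (inner ℝ (p - u) (coneDir i) : ℝ)) (hfin.inter_of_left _) ⟨v, hv, hvc⟩
  have hclosest : isClosest P u i w :=
    ⟨hwmem.1, hwmem.2, fun p hp hpc => hwmin p ⟨hp, hpc⟩⟩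
  have hwu : w ≠ u := hwmem.2.1
  refine ⟨w, hwmem.1, ⟨hu, hwmem.1, hwu.symm.symm.symm, Or.inl ⟨i, hclosest⟩⟩, ?_⟩
  by_cases hwv : w = v
  · exact Or.inl hwv
  · right
    have hproj : (inner ℝ (w - u) (coneDir i) : ℝ) ≤ (inner ℝ (v - u) (coneDir i) : ℝ) :=
      hwmin v ⟨hv, hvc⟩
    have hyθ := inner_of_mem_cone i hwmem.2
    have hkey := key_lemma i (sub_ne_zero_of_ne hvu) (sub_ne_zero_of_ne hwu) h hyθ hproj
    have e : (w - u) - (v - u) = w - v := by abel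
    rw [e] at hkey
    rw [dist_eq_norm, dist_eq_norm]
    calc ‖w - v‖ < ‖v - u‖ := hkey
      _ = ‖u - v‖ := norm_sub_rev _ _


/-- For every finite nonempty set `P` of points in the plane in general position,
the θ₅-graph of `P` is a connected graph. -/
theorem theta5_connected (P : Set Plane) (hfin : P.Finite) (hgp : GeneralPosition P)
    (hne : P.Nonempty) : ((thetaGraph P).induce P).Connected := by
  
  rw [SimpleGraph.connected_iff]
  have : Nonempty ↥P := hne.to_subtype
  refine ⟨?_, this⟩
  intro a b
  by_contra hnr
  set G := (thetaGraph P).induce P with hG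
  set S : Set (↥P × ↥P) := {z | ¬ G.Reachable z.1 z.2} with hS
  have hSfin : S.Finite := by
    have : Finite ↥P := hfin.to_subtype
    exact Set.toFinite S
  have hSne : S.Nonempty := ⟨(a, b), hnr⟩
  obtain ⟨⟨p, q⟩, hpq, hmin⟩ :=
    Set.exists_min_image S (fun z => dist (z.1 : Plane) (z.2 : Plane)) hSfin hSne
  have hpqne : (p : Plane) ≠ (q : Plane) := by
    intro he
    exact hpq (by rw [Subtype.ext he])
  have hx : (q : Plane) - (p : Plane) ≠ 0 := sub_ne_zero_of_ne (Ne.symm hpqne)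
  obtain ⟨i, hi⟩ := exists_good_dir _ hx (exists_polar _ hx)
  have hadj_reach : ∀ (x y : ↥P), (thetaGraph P).Adj x y → G.Reachable x y := by
    intro x y hxy
    exact SimpleGraph.Adj.reachable (by exact hxy)
  rcases hi with hgood | hgood
  · -- cone at p towards q
    obtain ⟨w, hwP, hadj, hcase⟩ := step_lemma P hfin p.2 q.2 (Ne.symm hpqne) i hgood
    have hrw : G.Reachable p ⟨w, hwP⟩ := hadj_reach p ⟨w, hwP⟩ hadj
    rcases hcase with hwv | hlt
    · exact hpq (by
        subst hwv
        exact hrw)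
    · have hnwq : ¬ G.Reachable ⟨w, hwP⟩ q := fun hreach => hpq (hrw.trans hreach)
      have := hmin (⟨w, hwP⟩, q) hnwq
      simp only at this
      exact absurd this (by simpa [dist_comm] using not_le.mpr hlt)
  · -- cone at q towards p
    have hgood' : ‖(p:Plane) - q‖ * Real.cos (π/10) ≤ (inner ℝ ((p:Plane) - q) (coneDir i) : ℝ) := by
      have e1 : (p:Plane) - q = -((q:Plane) - p) := by abel
      rw [e1, norm_neg]
      exact hgood
    obtain ⟨w, hwP, hadj, hcase⟩ := step_lemma P hfin q.2 p.2 hpqne i hgood'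
    have hrw : G.Reachable q ⟨w, hwP⟩ := hadj_reach q ⟨w, hwP⟩ hadj
    rcases hcase with hwv | hlt
    · exact hpq (by
        subst hwv
        exact hrw.symm)
    · have hnwp : ¬ G.Reachable ⟨w, hwP⟩ p := fun hreach => hpq ((hreach.symm).trans hrw.symm)
      have := hmin (⟨w, hwP⟩, p) hnwp
      simp only at this
      exact absurd this (by
        simp only [not_le]
        calc dist (w : Plane) (p : Plane) < dist (p:Plane) (q:Plane) := by
              rw [dist_comm]; simpa [dist_comm] using hlt
          _ = dist (p:Plane) (q:Plane) := rfl)
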